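/- Let M be a commutative monoid generated (as a monoid) by elements g_1, g_2, …, g_t, let f : M → ℂ, and let n_1, …, n_t be natural numbers such that Δ_{g_i}^{n_i+1} f(x) = 0 for all x ∈ M and all i = 1, …, t. Set N = n_1 + n_2 + ⋯ + n_t + t − 1. Then Δ_y^{N+1} f(x) = 0 for all x, y ∈ M. -/

import Mathlib

def fdiff {G M : Type*} [Add G] [Sub M] (h : G) (f : G → M) : G → M :=
  fun x => f (x + h) - f x

namespace IterDiffAux

variable {M : Type*} [AddCommMonoid M]

/-- The shift operator as a linear endomorphism. -/
noncomputable def shiftL (h : M) : Module.End ℂ (M → ℂ) where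
  toFun f := fun x => f (x + h)
  map_add' := by intros; rfl
  map_smul' := by intros; rfl

lemma shiftL_mul (a b : M) : shiftL a * shiftL b = shiftL (a + b) := by
  ext f x
  simp [shiftL, Module.End.mul_apply, add_assoc, add_comm b a]

noncomputable def shiftHom : Multiplicative M →* Module.End ℂ (M → ℂ) where
  toFun h := shiftL h.toAdd
  map_one' := by ext f x; simp [shiftL]
  map_mul' a b := by rw [shiftL_mul]; rfl

/-- Action of the monoid algebra on functions. -/
noncomputable def act : AddMonoidAlgebra ℂ M →ₐ[ℂ] Module.End ℂ (M → ℂ) :=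
  AddMonoidAlgebra.lift ℂ _ M shiftHom

lemma act_single (h : M) : act (M := M) (AddMonoidAlgebra.single h (1:ℂ)) = shiftL h := by
  rw [act, AddMonoidAlgebra.lift_single, one_smul]; rfl

/-- The difference operator as an element of the monoid algebra. -/
noncomputable def D (h : M) : AddMonoidAlgebra ℂ M :=
  AddMonoidAlgebra.single h 1 - 1

lemma act_D (h : M) (f : M → ℂ) : act (D h) f = fdiff h f := by
  ext x
  simp [D, act_single, shiftL, fdiff]

lemma act_D_pow (h : M) (m : ℕ) (f : M → ℂ) :
    act (D h ^ m) f = (fdiff h)^[m] f := by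
  induction m with
  | zero => simp
  | succ k ih =>
    rw [pow_succ', map_mul, Module.End.mul_apply, ih, act_D, Function.iterate_succ_apply']

/-- The annihilator ideal of `f`. -/
noncomputable def ann (f : M → ℂ) : Ideal (AddMonoidAlgebra ℂ M) where
  carrier := {r | act r f = 0}
  add_mem' := by intro a b ha hb; simp_all [Set.mem_setOf_eq, map_add]
  zero_mem' := by simp
  smul_mem' := by
    intro c x hx
    simp only [Set.mem_setOf_eq, smul_eq_mul, map_mul, Module.End.mul_apply] at *
    rw [hx, map_zero]

lemma mem_ann {f : M → ℂ} {r} : r ∈ ann f ↔ act r f = 0 := Iff.rfl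

lemma D_smul_pow_mem {f : M → ℂ} {a : M} {p : ℕ}
    (ha : D a ^ p ∈ ann f) (c : ℕ) : D (c • a) ^ p ∈ ann f := by
  have hD : D (c • a) = (∑ i ∈ Finset.range c, AddMonoidAlgebra.single a (1:ℂ) ^ i) * D a := by
    rw [D, D, geom_sum_mul, AddMonoidAlgebra.single_pow, one_pow]
  rw [hD, mul_pow]
  exact Ideal.mul_mem_left _ _ ha

lemma D_add_pow_mem {f : M → ℂ} {a b : M} {pa pb k : ℕ}
    (ha : D a ^ pa ∈ ann f) (hb : D b ^ pb ∈ ann f) (hk : pa + pb ≤ k + 1) :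
    D (a + b) ^ k ∈ ann f := by
  have hD : D (a + b) = (D a * AddMonoidAlgebra.single b (1:ℂ)) + D b := by
    have : AddMonoidAlgebra.single (a + b) (1:ℂ) =
        AddMonoidAlgebra.single a (1:ℂ) * AddMonoidAlgebra.single b (1:ℂ) := by
      rw [AddMonoidAlgebra.single_mul_single, one_mul]
    rw [D, D, D, this]; ring
  rw [hD]
  refine Ideal.add_pow_mem_of_pow_mem_of_le _ (m := pa) (n := pb) ?_ hb hk
  rw [mul_pow]
  exact Ideal.mul_mem_right _ _ ha

lemma sum_mem_ann {t : ℕ} (g : Fin t → M) (n : Fin t → ℕ) {f : M → ℂ}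
    (hg : ∀ i, D (g i) ^ (n i + 1) ∈ ann f) (c : Fin t → ℕ) :
    ∀ s : Finset (Fin t), s.Nonempty →
      D (∑ i ∈ s, c i • g i) ^ ((∑ i ∈ s, n i) + s.card) ∈ ann f := by
  intro s hs
  induction hs using Finset.Nonempty.cons_induction with
  | singleton a => simpa using D_smul_pow_mem (hg a) (c a)
  | cons a s ha hs ih =>
    rw [Finset.sum_cons]
    refine D_add_pow_mem (pa := n a + 1) (pb := (∑ i ∈ s, n i) + s.card)
      (D_smul_pow_mem (hg a) (c a)) ih ?_
    rw [Finset.sum_cons, Finset.card_cons]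
    omega

end IterDiffAux

theorem iterated_diff_of_monoid_generators {M : Type*} [AddCommMonoid M] {t : ℕ}
    (g : Fin t → M) (hgen : AddSubmonoid.closure (Set.range g) = ⊤)
    (f : M → ℂ) (n : Fin t → ℕ)
    (hdiff : ∀ i : Fin t, ∀ x : M, (fdiff (g i))^[n i + 1] f x = 0) :
    ∀ x y : M, (fdiff y)^[((∑ i, n i) + t - 1) + 1] f x = 0 := by
  open IterDiffAux in
  intro x y
  have hy : y ∈ AddSubmonoid.closure (Set.range g) := hgen ▸ AddSubmonoid.mem_top y
  rcases Nat.eq_zero_or_pos t with ht | ht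
  · subst ht
    have hrange : Set.range g = ∅ := by simp [Set.range_eq_empty]
    rw [hrange, AddSubmonoid.closure_empty, AddSubmonoid.mem_bot] at hy
    subst hy
    simp [fdiff]
  · -- decompose y
    have hdec : ∃ c : Fin t → ℕ, y = ∑ i, c i • g i := by
      induction hy using AddSubmonoid.closure_induction with
      | mem z hz =>
        obtain ⟨i, rfl⟩ := hz
        exact ⟨fun j => if j = i then 1 else 0, by simp⟩
      | zero => exact ⟨0, by simp⟩
      | add z w _ _ hz hw =>
        obtain ⟨cz, rfl⟩ := hz
        obtain ⟨cw, rfl⟩ := hw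
        exact ⟨cz + cw, by rw [← Finset.sum_add_distrib]; simp [add_smul]⟩
    obtain ⟨c, rfl⟩ := hdec
    have hg : ∀ i, D (g i) ^ (n i + 1) ∈ ann f := by
      intro i
      rw [mem_ann, act_D_pow]
      exact funext (hdiff i)
    have hmem := sum_mem_ann g n hg c Finset.univ ⟨⟨0, ht⟩, Finset.mem_univ _⟩
    rw [Finset.card_univ, Fintype.card_fin] at hmem
    have hmem' : D (∑ i, c i • g i) ^ (((∑ i, n i) + t - 1) + 1) ∈ ann f := by
      have : (∑ i, n i) + t = ((∑ i, n i) + t - 1) + 1 := by omega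
      rwa [this] at hmem
    rw [mem_ann, act_D_pow] at hmem'
    exact congrFun hmem' x
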